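/- Suppose f₁ and f₀ are ℓ1-Lipschitz with constants L₁ and L₀, and suppose L_UN := sup over all 0 ≤ π′ ≤ π ≤ 1 of [π·L₁ + (1−π)·L₀ + |f₁(0,π′) − f₀(0,π′)|] satisfies L_UN < 1. Then the UN one-step map f is a contraction on [0,1] with constant L_UN: |f(x) − f(y)| ≤ L_UN·|x − y| for all x, y ∈ [0,1]. -/
import Mathlib


open Filter Set Topology

/-- If `f₁` and `f₀` are ℓ1-Lipschitz with constants `L₁`, `L₀`, and
`L_UN := sup_{0 ≤ π' ≤ π ≤ 1} [π·L₁ + (1−π)·L₀ + |f₁(0,π') − f₀(0,π')|] < 1`,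
then the unconstrained one-step map `f(π) = π·f₁(0,π) + (1−π)·f₀(0,π)` is a contraction
on `[0,1]` with constant `L_UN`. -/
theorem UN_map_contraction
    (f₀ f₁ : ℝ → ℝ → ℝ) (L₀ L₁ LUN : ℝ)
    (hmap0 : ∀ x ∈ Set.Icc (0:ℝ) 1, ∀ y ∈ Set.Icc (0:ℝ) 1, f₀ x y ∈ Set.Icc (0:ℝ) 1)
    (hmap1 : ∀ x ∈ Set.Icc (0:ℝ) 1, ∀ y ∈ Set.Icc (0:ℝ) 1, f₁ x y ∈ Set.Icc (0:ℝ) 1)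
    (hlip1 : ∀ x₁ ∈ Set.Icc (0:ℝ) 1, ∀ x₂ ∈ Set.Icc (0:ℝ) 1,
        ∀ y₁ ∈ Set.Icc (0:ℝ) 1, ∀ y₂ ∈ Set.Icc (0:ℝ) 1,
        |f₁ x₁ x₂ - f₁ y₁ y₂| ≤ L₁ * (|x₁ - y₁| + |x₂ - y₂|))
    (hlip0 : ∀ x₁ ∈ Set.Icc (0:ℝ) 1, ∀ x₂ ∈ Set.Icc (0:ℝ) 1,
        ∀ y₁ ∈ Set.Icc (0:ℝ) 1, ∀ y₂ ∈ Set.Icc (0:ℝ) 1,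
        |f₀ x₁ x₂ - f₀ y₁ y₂| ≤ L₀ * (|x₁ - y₁| + |x₂ - y₂|))
    (hLUN : ∀ π' π : ℝ, 0 ≤ π' → π' ≤ π → π ≤ 1 →
        π * L₁ + (1 - π) * L₀ + |f₁ 0 π' - f₀ 0 π'| ≤ LUN)
    (hLUN1 : LUN < 1) :
    ∀ x ∈ Set.Icc (0:ℝ) 1, ∀ y ∈ Set.Icc (0:ℝ) 1,
      |(x * f₁ 0 x + (1 - x) * f₀ 0 x) - (y * f₁ 0 y + (1 - y) * f₀ 0 y)|
        ≤ LUN * |x - y| := by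

  have h0 : (0:ℝ) ∈ Set.Icc (0:ℝ) 1 := by constructor <;> norm_num
  have key : ∀ x ∈ Set.Icc (0:ℝ) 1, ∀ y ∈ Set.Icc (0:ℝ) 1, y ≤ x →
      |(x * f₁ 0 x + (1 - x) * f₀ 0 x) - (y * f₁ 0 y + (1 - y) * f₀ 0 y)|
        ≤ LUN * |x - y| := by
    intro x hx y hy hyx
    have h1 := hlip1 0 h0 x hx 0 h0 y hy
    have h0' := hlip0 0 h0 x hx 0 h0 y hy
    simp only [sub_self, abs_zero, zero_add] at h1 h0'
    have hyx' : (0:ℝ) ≤ x - y := by linarith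
    rw [abs_of_nonneg hyx'] at h1 h0' ⊢
    have hL := hLUN y x hy.1 hyx hx.2
    have e : (x * f₁ 0 x + (1 - x) * f₀ 0 x) - (y * f₁ 0 y + (1 - y) * f₀ 0 y)
        = x * (f₁ 0 x - f₁ 0 y) + (1 - x) * (f₀ 0 x - f₀ 0 y)
          + (x - y) * (f₁ 0 y - f₀ 0 y) := by ring
    rw [e]
    have hx0 : (0:ℝ) ≤ x := hx.1
    have hx1 : (0:ℝ) ≤ 1 - x := by linarith [hx.2]
    have hxy0 : (0:ℝ) ≤ x - y := by linarith
    have t1 : |x * (f₁ 0 x - f₁ 0 y)| ≤ x * (L₁ * (x - y)) := by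
      rw [abs_mul, abs_of_nonneg hx0]
      exact mul_le_mul_of_nonneg_left h1 hx0
    have t2 : |(1 - x) * (f₀ 0 x - f₀ 0 y)| ≤ (1 - x) * (L₀ * (x - y)) := by
      rw [abs_mul, abs_of_nonneg hx1]
      exact mul_le_mul_of_nonneg_left h0' hx1
    have t3 : |(x - y) * (f₁ 0 y - f₀ 0 y)| = (x - y) * |f₁ 0 y - f₀ 0 y| := by
      rw [abs_mul, abs_of_nonneg hxy0]
    have tri : |x * (f₁ 0 x - f₁ 0 y) + (1 - x) * (f₀ 0 x - f₀ 0 y)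
          + (x - y) * (f₁ 0 y - f₀ 0 y)|
        ≤ |x * (f₁ 0 x - f₁ 0 y)| + |(1 - x) * (f₀ 0 x - f₀ 0 y)|
          + |(x - y) * (f₁ 0 y - f₀ 0 y)| := abs_add_three _ _ _
    nlinarith [mul_le_mul_of_nonneg_right hL hxy0, tri, t1, t2, t3]
  intro x hx y hy
  rcases le_total y x with h | h
  · exact key x hx y hy h
  · rw [abs_sub_comm, abs_sub_comm x y]
    exact key y hy x hx h
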